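/- arXiv:2101.09623 — 4 statements merged into one kernel-verified Lean document; each statement's English description precedes it below -/
import Mathlib

section
/- Let Ω = [x_L, x_R] and suppose u_N, f_N, c_L, c_R : Ω → ℝ are continuously differentiable, with c_L(x_R) = c_R(x_L) = 0 and c_L(x_L) = c_R(x_R) = 1. If ∂_t u_N(x) = -f_N'(x) - c_L'(x)·(F_L - f_N(x_L)) - c_R'(x)·(F_R - f_N(x_R)) for all x ∈ Ω (where F_L, F_R are real constants), then d/dt ∫_Ω u_N dx = -(F_R - F_L). -/
open MeasureTheory intervalIntegral

/-- Conservation of the FR-RBF method: if the semidiscrete time derivative of `uN` is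
`-fN' - cL'·(FL - fN xL) - cR'·(FR - fN xR)` and the correction functions satisfy the
boundary normalization, then `d/dt ∫ uN dx = -(FR - FL)`. -/
theorem frRBF_conservation
    (xL xR : ℝ) (hx : xL ≤ xR)
    (uN uN_t : ℝ → ℝ → ℝ) (fN fN' cL cL' cR cR' : ℝ → ℝ) (FL FR : ℝ) (t₀ : ℝ)
    -- C¹ regularity of fN, cL, cR on Ω = [xL, xR]
    (hfN : ∀ x ∈ Set.uIcc xL xR, HasDerivAt fN (fN' x) x)
    (hfN' : IntervalIntegrable fN' volume xL xR)
    (hcL : ∀ x ∈ Set.uIcc xL xR, HasDerivAt cL (cL' x) x)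
    (hcL' : IntervalIntegrable cL' volume xL xR)
    (hcR : ∀ x ∈ Set.uIcc xL xR, HasDerivAt cR (cR' x) x)
    (hcR' : IntervalIntegrable cR' volume xL xR)
    -- boundary normalization of the correction functions
    (hcLL : cL xL = 1) (hcLR : cL xR = 0) (hcRL : cR xL = 0) (hcRR : cR xR = 1)
    -- the FR-RBF semidiscretization
    (hpde : ∀ x, uN_t t₀ x = -(fN' x) - cL' x * (FL - fN xL) - cR' x * (FR - fN xR))
    -- differentiation under the integral sign is assumed valid
    (hdiff : HasDerivAt (fun t => ∫ x in xL..xR, uN t x)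
      (∫ x in xL..xR, uN_t t₀ x) t₀) :
    HasDerivAt (fun t => ∫ x in xL..xR, uN t x) (-(FR - FL)) t₀ := by
  have hf := intervalIntegral.integral_eq_sub_of_hasDerivAt hfN hfN'
  have hL := intervalIntegral.integral_eq_sub_of_hasDerivAt hcL hcL'
  have hR := intervalIntegral.integral_eq_sub_of_hasDerivAt hcR hcR'
  have key : (∫ x in xL..xR, uN_t t₀ x) = -(FR - FL) := by
    have : (∫ x in xL..xR, uN_t t₀ x)
        = ∫ x in xL..xR, (-(fN' x) - cL' x * (FL - fN xL) - cR' x * (FR - fN xR)) := by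
      apply intervalIntegral.integral_congr
      intro x _; exact hpde x
    rw [this]
    rw [intervalIntegral.integral_sub (by exact (hfN'.neg).sub (hcL'.mul_const _))
      (hcR'.mul_const _),
      intervalIntegral.integral_sub (by exact hfN'.neg) (hcL'.mul_const _),
      intervalIntegral.integral_neg, intervalIntegral.integral_mul_const,
      intervalIntegral.integral_mul_const, hf, hL, hR, hcLL, hcLR, hcRL, hcRR]
    ring
  rw [← key]; exact hdiff
end

section
/- Let a > 0, g : [0,∞) → ℝ, and let u : [0,∞) → V be a time-dependent element of a finite-dimensional subspace V ⊆ C¹([x_L,x_R]). Suppose the correction functions c_L, c_R ∈ C¹([x_L,x_R]) satisfy ∫ v·c_L' dx = -v(x_L) and ∫ v·c_R' dx = v(x_R) for all v ∈ V. If u satisfies ∂_t u = -a·u' - c_L'·(a·g(t) - a·u(x_L,t)) - c_R'·(a·u(x_R,t) - a·u(x_R,t)), then d/dt ‖u(·,t)‖²_{L²} ≤ a·g(t)². -/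
open MeasureTheory intervalIntegral

/-- Energy estimate for the FR-RBF method with upwind flux for `∂ₜ u + a ∂ₓ u = 0`:
`d/dt ‖u(·,t)‖²_{L²} ≤ a·g(t)²`. -/
theorem frRBF_energy_estimate
    (xL xR : ℝ) (hx : xL ≤ xR) (a : ℝ) (ha : 0 < a) (g : ℝ → ℝ)
    (V : Submodule ℝ (ℝ → ℝ))
    (u u_t u_x : ℝ → ℝ → ℝ) (cL cL' cR cR' : ℝ → ℝ) (t₀ : ℝ) (ht₀ : 0 ≤ t₀)
    -- V is a finite-dimensional subspace of C¹ functions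
    (hVfin : FiniteDimensional ℝ V)
    (hVC1 : ∀ v ∈ V, ∀ x ∈ Set.uIcc xL xR, DifferentiableAt ℝ v x)
    -- u(·, t) belongs to V and u_x is its spatial derivative
    (huV : ∀ t, (fun x => u t x) ∈ V)
    (hux : ∀ t, ∀ x ∈ Set.uIcc xL xR, HasDerivAt (fun y => u t y) (u_x t x) x)
    (huint : IntervalIntegrable (fun x => u t₀ x * u_x t₀ x) volume xL xR)
    -- C¹ correction functions satisfying the stability conditions on V
    (hcL : ∀ x ∈ Set.uIcc xL xR, HasDerivAt cL (cL' x) x)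
    (hcR : ∀ x ∈ Set.uIcc xL xR, HasDerivAt cR (cR' x) x)
    (hcLstab : ∀ v ∈ V, (∫ x in xL..xR, v x * cL' x) = -(v xL))
    (hcRstab : ∀ v ∈ V, (∫ x in xL..xR, v x * cR' x) = v xR)
    -- the FR-RBF semidiscretization with upwind numerical flux
    (hpde : ∀ x, u_t t₀ x =
      -(a * u_x t₀ x) - cL' x * (a * g t₀ - a * u t₀ xL)
        - cR' x * (a * u t₀ xR - a * u t₀ xR))
    -- chain rule / differentiation under the integral sign is assumed valid
    (D : ℝ)
    (hE : HasDerivAt (fun t => ∫ x in xL..xR, (u t x) ^ 2) D t₀)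
    (hD : D = 2 * ∫ x in xL..xR, u t₀ x * u_t t₀ x) :
    D ≤ a * g t₀ ^ 2 := by

  set k : ℝ := a * g t₀ - a * u t₀ xL with hk
  -- fundamental theorem of calculus for ∫ 2 u u_x
  have hS : (∫ x in xL..xR, 2 * (u t₀ x * u_x t₀ x))
      = u t₀ xR ^ 2 - u t₀ xL ^ 2 := by
    apply intervalIntegral.integral_eq_sub_of_hasDerivAt
    · intro x hxx
      have : HasDerivAt (fun y => u t₀ y ^ 2) ((2:ℕ) * u t₀ x ^ (2 - 1) * u_x t₀ x) x :=
        (hux t₀ x hxx).pow 2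
      refine this.congr_deriv ?_
      push_cast
      ring
    · exact huint.const_mul 2
  have hS' : (∫ x in xL..xR, u t₀ x * u_x t₀ x)
      = (u t₀ xR ^ 2 - u t₀ xL ^ 2) / 2 := by
    rw [intervalIntegral.integral_const_mul] at hS
    linarith
  have hcLu : (∫ x in xL..xR, u t₀ x * cL' x) = -(u t₀ xL) := hcLstab _ (huV t₀)
  have hInt : (∫ x in xL..xR, u t₀ x * u_t t₀ x)
      = ∫ x in xL..xR, ((-a) * (u t₀ x * u_x t₀ x) + (-k) * (u t₀ x * cL' x)) := by
    congr 1
    funext x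
    rw [hpde x, hk]
    ring
  by_cases hI : IntervalIntegrable (fun x => u t₀ x * cL' x) volume xL xR
  · rw [hInt, intervalIntegral.integral_add (huint.const_mul _) (hI.const_mul _),
      intervalIntegral.integral_const_mul, intervalIntegral.integral_const_mul,
      hcLu, hS'] at hD
    rw [hD, hk]
    nlinarith [sq_nonneg (g t₀ - u t₀ xL), sq_nonneg (u t₀ xR), ha.le]
  · have huL0 : u t₀ xL = 0 := by
      have h0 := intervalIntegral.integral_undef hI
      rw [h0] at hcLu
      linarith
    by_cases hg : g t₀ = 0
    · have hk0 : k = 0 := by rw [hk, huL0, hg]; ring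
      rw [hInt, hk0] at hD
      simp only [neg_zero, zero_mul, add_zero] at hD
      rw [intervalIntegral.integral_const_mul, hS', huL0] at hD
      rw [hD, hg]
      nlinarith [sq_nonneg (u t₀ xR)]
    · have hkne : k ≠ 0 := by
        rw [hk, huL0]
        simp only [mul_zero, sub_zero]
        exact mul_ne_zero ha.ne' hg
      have hnI : ¬ IntervalIntegrable
          (fun x => (-a) * (u t₀ x * u_x t₀ x) + (-k) * (u t₀ x * cL' x)) volume xL xR := by
        intro h
        apply hI
        have h2 := h.add (huint.const_mul a)
        have heq : (fun x => ((-a) * (u t₀ x * u_x t₀ x) + (-k) * (u t₀ x * cL' x))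
            + a * (u t₀ x * u_x t₀ x)) = fun x => (-k) * (u t₀ x * cL' x) := by
          funext x; ring
        rw [heq] at h2
        have h3 := h2.const_mul (-k)⁻¹
        have heq2 : (fun x => (-k)⁻¹ * ((-k) * (u t₀ x * cL' x)))
            = fun x => u t₀ x * cL' x := by
          funext x
          rw [← mul_assoc, inv_mul_cancel₀ (neg_ne_zero.mpr hkne), one_mul]
        rwa [heq2] at h3
      rw [hInt, intervalIntegral.integral_undef hnI, mul_zero] at hD
      rw [hD]
      positivity
end

section
/- Let a > 0, τ_L < -1/2, g : [0,∞) → ℝ continuous, and let u : [0,∞) → C¹([x_L,x_R]) be differentiable in time with ∂_t u = -a·u' + SAT in a weak sense, meaning d/dt ∫ u² dx = -2a ∫ u·u' dx + 2·u(x_L,t)·τ_L·a·(u(x_L,t) - g(t)). Then for all t ≥ 0, ‖u(·,t)‖²_{L²} ≤ ‖u(·,0)‖²_{L²} + (-τ_L²·a/(1+2τ_L)) · ∫₀ᵗ g(s)² ds. -/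
open MeasureTheory intervalIntegral

/-- Strong energy stability of the 1D SAT-RBF semidiscretization for
`∂ₜ u + a ∂ₓ u = 0`, `a > 0`, with SAT penalty `τL < -1/2` at the inflow boundary:
`‖u(t)‖² ≤ ‖u(0)‖² + (-τL²·a/(1+2τL)) ∫₀ᵗ g(s)² ds`. -/
theorem satRBF_energy_stability
    (xL xR : ℝ) (hx : xL ≤ xR) (a τL : ℝ) (ha : 0 < a) (hτ : τL < -(1 / 2))
    (g : ℝ → ℝ) (hg : Continuous g)
    (u u_x : ℝ → ℝ → ℝ)
    -- u(t, ·) is C¹ in space with spatial derivative u_x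
    (hux : ∀ t, ∀ x ∈ Set.uIcc xL xR, HasDerivAt (fun y => u t y) (u_x t x) x)
    (huint : ∀ t, IntervalIntegrable (fun x => u t x * u_x t x) volume xL xR)
    -- the SAT-RBF energy relation (weak form of ∂ₜ u = -a u' + SAT)
    (hE : ∀ t, 0 ≤ t → HasDerivAt (fun s => ∫ x in xL..xR, (u s x) ^ 2)
      (-(2 * a) * (∫ x in xL..xR, u t x * u_x t x)
        + 2 * u t xL * τL * a * (u t xL - g t)) t) :
    ∀ t, 0 ≤ t →
      (∫ x in xL..xR, (u t x) ^ 2) ≤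
        (∫ x in xL..xR, (u 0 x) ^ 2)
          + (-(τL ^ 2) * a / (1 + 2 * τL)) * ∫ s in (0 : ℝ)..t, g s ^ 2 := by
  intro t ht
  set C : ℝ := -(τL ^ 2) * a / (1 + 2 * τL) with hC
  have h2 : 1 + 2 * τL < 0 := by linarith
  -- value of the space integral
  have hint : ∀ s, (∫ x in xL..xR, u s x * u_x s x)
      = u s xR ^ 2 / 2 - u s xL ^ 2 / 2 := by
    intro s
    have hD : ∀ x ∈ Set.uIcc xL xR,
        HasDerivAt (fun y => u s y ^ 2 / 2) (u s x * u_x s x) x := by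
      intro x hxm
      have h' := ((hux s x hxm).fun_pow 2).div_const 2
      refine h'.congr_deriv ?_
      push_cast
      ring
    simpa using intervalIntegral.integral_eq_sub_of_hasDerivAt hD (huint s)
  -- derivative of the accumulated inflow data
  have hG : ∀ s : ℝ, HasDerivAt (fun r => ∫ x in (0:ℝ)..r, g x ^ 2) (g s ^ 2) s := by
    intro s
    exact ((hg.pow 2).integral_hasStrictDerivAt 0 s).hasDerivAt
  -- the function F
  set F : ℝ → ℝ := fun s => (∫ x in xL..xR, (u s x) ^ 2) - C * ∫ r in (0:ℝ)..s, g r ^ 2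
    with hF
  have hFderiv : ∀ s, 0 ≤ s → HasDerivAt F
      (-(2 * a) * (∫ x in xL..xR, u s x * u_x s x)
        + 2 * u s xL * τL * a * (u s xL - g s) - C * g s ^ 2) s := by
    intro s hs
    exact (hE s hs).sub ((hG s).const_mul C)
  have hds : ∀ s, 0 ≤ s →
      (-(2 * a) * (∫ x in xL..xR, u s x * u_x s x)
        + 2 * u s xL * τL * a * (u s xL - g s) - C * g s ^ 2) ≤ 0 := by
    intro s hs
    rw [hint s]
    have hCg : C * g s ^ 2 = -(τL ^ 2) * a * g s ^ 2 / (1 + 2 * τL) := by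
      rw [hC]; ring
    rw [hCg, sub_nonpos, le_div_iff_of_neg h2]
    nlinarith [mul_nonneg ha.le (sq_nonneg ((1 + 2 * τL) * u s xL - τL * g s)),
      mul_nonneg (mul_nonneg (neg_nonneg.mpr h2.le) ha.le) (sq_nonneg (u s xR))]
  have hmono : F t ≤ F 0 := by
    have hanti : AntitoneOn F (Set.Icc 0 t) := by
      apply antitoneOn_of_deriv_nonpos (convex_Icc 0 t)
      · intro s hs
        exact (hFderiv s hs.1).continuousAt.continuousWithinAt
      · intro s hs
        rw [interior_Icc] at hs
        exact (hFderiv s hs.1.le).differentiableAt.differentiableWithinAt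
      · intro s hs
        rw [interior_Icc] at hs
        rw [(hFderiv s hs.1.le).deriv]
        exact hds s hs.1.le
    exact hanti (Set.left_mem_Icc.mpr ht) (Set.right_mem_Icc.mpr ht) ht
  have h0 : (∫ r in (0:ℝ)..(0:ℝ), g r ^ 2) = 0 := intervalIntegral.integral_same
  simp only [hF, h0, mul_zero, sub_zero] at hmono
  linarith
end

section
/- Let φ : [0,∞) → ℝ be a conditionally positive definite kernel of order m on ℝ^d, let X = {x₁,…,x_N} ⊂ ℝ^d be distinct points that are unisolvent for polynomials of degree < m, let Φ be the N×N matrix with Φ_{ij} = φ(‖x_i - x_j‖₂), and let P be the Q×N matrix P_{in} = p_i(x_n) for a basis {p₁,…,p_Q} of polynomials of degree < m. Then the (N+Q)×(N+Q) block matrix V = [[Φ, Pᵀ],[P, 0]] is invertible. -/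
open Matrix

/-- Well-posedness of RBF interpolation augmented with polynomials: for a conditionally
positive definite kernel `φ` of order `m` on `ℝ^d`, distinct centers `x₁,…,x_N` that are
unisolvent for polynomials of degree `< m`, and a basis `p₁,…,p_Q` of the polynomials of
degree `< m`, the block Vandermonde matrix `V = [[Φ, Pᵀ], [P, 0]]` is invertible. -/
theorem rbf_vandermonde_invertible
    (d m N Q : ℕ) (φ : ℝ → ℝ)
    (x : Fin N → EuclideanSpace ℝ (Fin d)) (hx : Function.Injective x)
    (p : Fin Q → MvPolynomial (Fin d) ℝ)
    -- {p i} is a basis of the polynomials of total degree < m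
    (hpdeg : ∀ i, (p i).totalDegree < m)
    (hpli : LinearIndependent ℝ p)
    (hpspan : ∀ q : MvPolynomial (Fin d) ℝ, q.totalDegree < m →
      q ∈ Submodule.span ℝ (Set.range p))
    -- φ is conditionally positive definite of order m on ℝ^d
    (hφ : ∀ (M : ℕ) (y : Fin M → EuclideanSpace ℝ (Fin d)), Function.Injective y →
      ∀ α : Fin M → ℝ, α ≠ 0 →
        (∀ q : MvPolynomial (Fin d) ℝ, q.totalDegree < m →
          ∑ n, α n * MvPolynomial.eval (fun k => y n k) q = 0) →
        0 < ∑ i, ∑ j, α i * α j * φ (dist (y i) (y j)))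
    -- X is unisolvent for polynomials of degree < m
    (huni : ∀ q : MvPolynomial (Fin d) ℝ, q.totalDegree < m →
      (∀ n, MvPolynomial.eval (fun k => x n k) q = 0) → q = 0)
    (Φ : Matrix (Fin N) (Fin N) ℝ) (hΦ : ∀ i j, Φ i j = φ (dist (x i) (x j)))
    (P : Matrix (Fin Q) (Fin N) ℝ)
    (hP : ∀ i n, P i n = MvPolynomial.eval (fun k => x n k) (p i)) :
    IsUnit (Matrix.fromBlocks Φ Pᵀ P (0 : Matrix (Fin Q) (Fin Q) ℝ)) := by
  rw [Matrix.isUnit_iff_isUnit_det, isUnit_iff_ne_zero]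
  intro hdet
  obtain ⟨v, hv, hmul⟩ := (Matrix.exists_mulVec_eq_zero_iff).mpr hdet
  set α : Fin N → ℝ := fun i => v (Sum.inl i) with hαdef
  set β : Fin Q → ℝ := fun i => v (Sum.inr i) with hβdef
  have h1 : ∀ i, (Φ.mulVec α) i + (Pᵀ.mulVec β) i = 0 := by
    intro i
    have := congrFun hmul (Sum.inl i)
    simpa [Matrix.fromBlocks_mulVec, α, β, Function.comp_def] using this
  have h2 : ∀ i, (P.mulVec α) i = 0 := by
    intro i
    have := congrFun hmul (Sum.inr i)
    simpa [Matrix.fromBlocks_mulVec, α, β, Function.comp_def] using this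
  -- step 1: α = 0
  have hα : α = 0 := by
    by_contra hαne
    have hL : ∀ q : MvPolynomial (Fin d) ℝ, q.totalDegree < m →
        ∑ n, α n * MvPolynomial.eval (fun k => x n k) q = 0 := by
      intro q hq
      let L : MvPolynomial (Fin d) ℝ →ₗ[ℝ] ℝ :=
        { toFun := fun q => ∑ n, α n * MvPolynomial.eval (fun k => x n k) q
          map_add' := by
            intro a b
            simp [mul_add, Finset.sum_add_distrib]
          map_smul' := by
            intro c a
            simp [Finset.mul_sum, mul_left_comm] }
      have hker : Submodule.span ℝ (Set.range p) ≤ LinearMap.ker L := by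
        rw [Submodule.span_le]
        rintro _ ⟨i, rfl⟩
        have h2i := h2 i
        simp only [Matrix.mulVec, dotProduct, hP] at h2i
        show ∑ n, α n * MvPolynomial.eval (fun k => x n k) (p i) = 0
        rw [← h2i]
        exact Finset.sum_congr rfl fun n _ => mul_comm _ _
      exact hker (hpspan q hq)
    have hpos := hφ N x hx α hαne hL
    have hzero : ∑ i, ∑ j, α i * α j * φ (dist (x i) (x j)) = 0 := by
      have e1 : ∑ i, ∑ j, α i * α j * φ (dist (x i) (x j))
          = ∑ i, α i * (Φ.mulVec α) i := by
        refine Finset.sum_congr rfl fun i _ => ?_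
        simp only [Matrix.mulVec, dotProduct, Finset.mul_sum, hΦ]
        exact Finset.sum_congr rfl fun j _ => by ring
      have e2 : ∑ i, α i * (Φ.mulVec α) i = - ∑ i, α i * (Pᵀ.mulVec β) i := by
        rw [← Finset.sum_neg_distrib]
        refine Finset.sum_congr rfl fun i _ => ?_
        have hi : (Φ.mulVec α) i = -((Pᵀ.mulVec β) i) := by linarith [h1 i]
        rw [hi]; ring
      have e3 : ∑ i, α i * (Pᵀ.mulVec β) i = ∑ j, β j * (P.mulVec α) j := by
        simp only [Matrix.mulVec, dotProduct, Matrix.transpose_apply, Finset.mul_sum]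
        rw [Finset.sum_comm]
        refine Finset.sum_congr rfl fun j _ => Finset.sum_congr rfl fun i _ => by ring
      rw [e1, e2, e3]
      simp [h2]
    linarith
  -- step 2: β = 0
  have hPtβ : ∀ n, (Pᵀ.mulVec β) n = 0 := by
    intro n
    have := h1 n
    rw [hα] at this
    simpa using this
  have hβ : β = 0 := by
    rcases Nat.eq_zero_or_pos Q with hQ | hQ
    · subst hQ; funext i; exact absurd i.2 (by simp)
    · have hm : 0 < m := lt_of_le_of_lt (Nat.zero_le _) (hpdeg ⟨0, hQ⟩)
      set q : MvPolynomial (Fin d) ℝ := ∑ i, β i • p i with hqdef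
      have hqdeg : q.totalDegree < m := by
        refine lt_of_le_of_lt (MvPolynomial.totalDegree_finset_sum _ _) ?_
        rw [Finset.sup_lt_iff (by simpa using hm)]
        intro i _
        exact lt_of_le_of_lt (MvPolynomial.totalDegree_smul_le _ _) (hpdeg i)
      have hqzero : q = 0 := by
        refine huni q hqdeg fun n => ?_
        have h := hPtβ n
        simp only [Matrix.mulVec, dotProduct, Matrix.transpose_apply, hP] at h
        rw [hqdef]
        simp only [map_sum, MvPolynomial.smul_eval]
        rw [← h]
        exact Finset.sum_congr rfl fun i _ => by ring
      have := Fintype.linearIndependent_iff.mp hpli β (by rw [← hqdef]; exact hqzero)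
      funext i; exact this i
  -- conclude v = 0
  apply hv
  funext i
  cases i with
  | inl i => exact congrFun hα i
  | inr i => exact congrFun hβ i
end
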